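/- For n×n positive definite complex matrices A, B and n×n positive semidefinite complex matrices C, D, the trace Tr[(A−B)(B⁻¹−A⁻¹) + (C−D)((B+D)⁻¹−(A+C)⁻¹)] is a real number and is greater than or equal to 0. -/

import Mathlib

open Matrix ComplexOrder

variable {n : ℕ}

private lemma BLD_psd_trace_nonneg {M : Matrix (Fin n) (Fin n) ℂ} (hM : M.PosSemidef) :
    0 ≤ M.trace := by
  rw [Matrix.trace]
  apply Finset.sum_nonneg
  intro i _
  have h := hM.diag_nonneg (i := i)
  simpa [Matrix.diag] using h

open scoped MatrixOrder in
private lemma BLD_key_trace {H P Q : Matrix (Fin n) (Fin n) ℂ} (hH : H.IsHermitian)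
    (hP : P.PosSemidef) (hQ : Q.PosSemidef) : 0 ≤ (H * P * H * Q).trace := by
  set S := CFC.sqrt Q with hS
  have hs : S.IsHermitian := (CFC.sqrt_nonneg Q).posSemidef.1
  have h1 : (H * P * H * Q).trace = ((S * H) * P * (S * H)ᴴ).trace := by
    rw [conjTranspose_mul, hH.eq, hs.eq, ← CFC.sqrt_mul_sqrt_self Q hQ.nonneg, ← hS]
    rw [show H * P * H * (S * S) = (H * P * H * S) * S by noncomm_ring, trace_mul_comm]
    congr 1
    noncomm_ring
  rw [h1]
  exact BLD_psd_trace_nonneg (hP.mul_mul_conjTranspose_same _)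

private lemma BLD_inv_sub_inv {M N : Matrix (Fin n) (Fin n) ℂ} (hM : M.PosDef) (hN : N.PosDef) :
    N⁻¹ - M⁻¹ = N⁻¹ * (M - N) * M⁻¹ := by
  have hMd : IsUnit M.det := isUnit_iff_isUnit_det _ |>.mp hM.isUnit
  have hNd : IsUnit N.det := isUnit_iff_isUnit_det _ |>.mp hN.isUnit
  rw [Matrix.mul_sub, Matrix.sub_mul, Matrix.mul_assoc, Matrix.mul_nonsing_inv _ hMd,
    Matrix.nonsing_inv_mul _ hNd, Matrix.mul_one, Matrix.one_mul]

private lemma BLD_inv_sub_inv_psd {M E : Matrix (Fin n) (Fin n) ℂ} (hM : M.PosDef)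
    (hE : E.PosSemidef) : (M⁻¹ - (M + E)⁻¹).PosSemidef := by
  have hN : (M + E).PosDef := hM.add_posSemidef hE
  set N := M + E with hNdef
  have hMd : IsUnit M.det := isUnit_iff_isUnit_det _ |>.mp hM.isUnit
  have hNd : IsUnit N.det := isUnit_iff_isUnit_det _ |>.mp hN.isUnit
  have cMi : ∀ Y : Matrix (Fin n) (Fin n) ℂ, M * (M⁻¹ * Y) = Y := fun Y => by
    rw [← Matrix.mul_assoc, Matrix.mul_nonsing_inv _ hMd, Matrix.one_mul]
  have ciM : ∀ Y : Matrix (Fin n) (Fin n) ℂ, M⁻¹ * (M * Y) = Y := fun Y => by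
    rw [← Matrix.mul_assoc, Matrix.nonsing_inv_mul _ hMd, Matrix.one_mul]
  have cNi : ∀ Y : Matrix (Fin n) (Fin n) ℂ, N * (N⁻¹ * Y) = Y := fun Y => by
    rw [← Matrix.mul_assoc, Matrix.mul_nonsing_inv _ hNd, Matrix.one_mul]
  have ciN : ∀ Y : Matrix (Fin n) (Fin n) ℂ, N⁻¹ * (N * Y) = Y := fun Y => by
    rw [← Matrix.mul_assoc, Matrix.nonsing_inv_mul _ hNd, Matrix.one_mul]
  have hMi : M * M⁻¹ = 1 := Matrix.mul_nonsing_inv _ hMd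
  have hiM : M⁻¹ * M = 1 := Matrix.nonsing_inv_mul _ hMd
  have hNi : N * N⁻¹ = 1 := Matrix.mul_nonsing_inv _ hNd
  have hiN : N⁻¹ * N = 1 := Matrix.nonsing_inv_mul _ hNd
  have hid : M⁻¹ - N⁻¹ = N⁻¹ * (E + E * M⁻¹ * E) * (N⁻¹)ᴴ := by
    rw [hN.inv.isHermitian.eq]
    have hEeq : E = N - M := by rw [hNdef]; abel
    rw [hEeq]
    simp only [Matrix.sub_mul, Matrix.mul_sub, Matrix.add_mul, Matrix.mul_add,
      Matrix.mul_assoc, cMi, ciM, cNi, ciN, hMi, hiM, hNi, hiN,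
      Matrix.mul_one, Matrix.one_mul]
    abel
  rw [hid]
  apply Matrix.PosSemidef.mul_mul_conjTranspose_same
  exact hE.add (by simpa [hE.1.eq] using hM.inv.posSemidef.mul_mul_conjTranspose_same E)

theorem trace_BLD_nonneg {n : ℕ} (A B C D : Matrix (Fin n) (Fin n) ℂ)
    (hA : A.PosDef) (hB : B.PosDef) (hC : C.PosSemidef) (hD : D.PosSemidef) :
    (((A - B) * (B⁻¹ - A⁻¹) + (C - D) * ((B + D)⁻¹ - (A + C)⁻¹)).trace).im = 0 ∧
    0 ≤ (((A - B) * (B⁻¹ - A⁻¹) + (C - D) * ((B + D)⁻¹ - (A + C)⁻¹)).trace).re := by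
  have hAC : (A + C).PosDef := hA.add_posSemidef hC
  have hBD : (B + D).PosDef := hB.add_posSemidef hD
  set X := A - B with hXdef
  set Z := (A + C) - (B + D) with hZdef
  set P := (B + D)⁻¹ with hPdef
  set Q := (A + C)⁻¹ with hQdef
  have hX : X.IsHermitian := hA.1.sub hB.1
  have hZ : Z.IsHermitian := hAC.1.sub hBD.1
  have hP : P.PosSemidef := hBD.inv.posSemidef
  have hQ : Q.PosSemidef := hAC.inv.posSemidef
  -- imaginary part
  have him : (((A - B) * (B⁻¹ - A⁻¹) + (C - D) * (P - Q)).trace).im = 0 := by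
    rw [← Complex.conj_eq_iff_im, ← Complex.star_def, ← trace_conjTranspose]
    rw [conjTranspose_add, conjTranspose_mul, conjTranspose_mul,
      (hB.inv.isHermitian.sub hA.inv.isHermitian).eq, hX.eq,
      (hBD.inv.isHermitian.sub hAC.inv.isHermitian).eq, (hC.1.sub hD.1).eq,
      trace_add, trace_add, trace_mul_comm, trace_mul_comm (C - D)]
  refine ⟨him, ?_⟩
  -- rewrite the matrix
  have e1 : B⁻¹ - A⁻¹ = B⁻¹ * X * A⁻¹ := BLD_inv_sub_inv hA hB
  have e2 : P - Q = P * Z * Q := BLD_inv_sub_inv hAC hBD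
  have e3 : C - D = Z - X := by rw [hZdef, hXdef]; abel
  have hB1 : B⁻¹ - P = B⁻¹ - (B + D)⁻¹ := rfl
  have hA1 : A⁻¹ - Q = A⁻¹ - (A + C)⁻¹ := rfl
  have e4 : (A - B) * (B⁻¹ - A⁻¹) + (C - D) * (P - Q)
      = X * (B⁻¹ - P) * X * A⁻¹ + X * P * X * (A⁻¹ - Q) + X * P * X * Q
        + Z * P * Z * Q - X * P * Z * Q := by
    rw [e1, e2, e3, ← hXdef]
    simp only [Matrix.sub_mul, Matrix.mul_sub, Matrix.mul_assoc]
    abel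
  rw [e4]
  -- trace facts
  have c1 : 0 ≤ (X * (B⁻¹ - P) * X * A⁻¹).trace :=
    BLD_key_trace hX (BLD_inv_sub_inv_psd hB hD) hA.inv.posSemidef
  have c2 : 0 ≤ (X * P * X * (A⁻¹ - Q)).trace :=
    BLD_key_trace hX hP (BLD_inv_sub_inv_psd hA hC)
  have c3 : 0 ≤ (X * P * X * Q).trace := BLD_key_trace hX hP hQ
  have c4 : 0 ≤ (Z * P * Z * Q).trace := BLD_key_trace hZ hP hQ
  have c5 : 0 ≤ ((X - Z) * P * (X - Z) * Q).trace := BLD_key_trace (hX.sub hZ) hP hQ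
  -- conjugate relation between the two cross terms
  have c6 : (Z * P * X * Q).trace = star (X * P * Z * Q).trace := by
    rw [← trace_conjTranspose, conjTranspose_mul, conjTranspose_mul, conjTranspose_mul,
      hX.eq, hZ.eq, hP.1.eq, hQ.1.eq, trace_mul_comm]
    congr 1
    simp only [Matrix.mul_assoc]
  -- pass to real parts
  simp only [trace_add, trace_sub, Complex.add_re, Complex.sub_re]
  rw [Complex.le_def] at c1 c2 c3 c4 c5
  simp only [Complex.zero_re, Complex.zero_im] at c1 c2 c3 c4 c5
  have h6 : (Z * P * X * Q).trace.re = (X * P * Z * Q).trace.re := by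
    rw [c6]; simp
  -- Cauchy-Schwarz: 2*Re(cross) ≤ tr XPXQ + tr ZPZQ is encoded by c5 + the identity e5
  have e5 : ((X - Z) * P * (X - Z) * Q).trace
      = (X * P * X * Q).trace + (Z * P * Z * Q).trace
        - ((X * P * Z * Q).trace + (Z * P * X * Q).trace) := by
    rw [← trace_add, ← trace_add, ← trace_sub]
    congr 1
    simp only [Matrix.sub_mul, Matrix.mul_sub, Matrix.mul_assoc]
    abel
  have e5re := congrArg Complex.re e5
  simp only [Complex.add_re, Complex.sub_re] at e5re
  linarith [c1.1, c2.1, c3.1, c4.1, c5.1, h6, e5re]
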